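/- Let N ≥ 1, p_i ∈ (0,1) with q_i = 1-p_i, w_i = log(p_i/q_i), and let η_1,…,η_N be independent with η_i Bernoulli(p_i) (values in {0,1}). Then P( Σ_{i=1}^N w_i(2η_i - 1) ≤ 0 ) ≤ Π_{i=1}^N 2√(p_i q_i). -/

import Mathlib

open MeasureTheory ProbabilityTheory

lemma sqrt_mul_self_aux {x y : ℝ} (hx : 0 < x) (hy : 0 ≤ y) :
    x * Real.sqrt (y / x) = Real.sqrt (x * y) := by
  have : x * Real.sqrt (y / x) = Real.sqrt (x ^ 2) * Real.sqrt (y / x) := by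
    rw [Real.sqrt_sq hx.le]
  rw [this, ← Real.sqrt_mul (sq_nonneg x)]
  congr 1
  field_simp

lemma exp_neg_half_log {r : ℝ} (hr : 0 < r) :
    Real.exp (-(1 / 2) * Real.log r) = Real.sqrt r⁻¹ := by
  rw [mul_comm, ← Real.rpow_def_of_pos hr, Real.rpow_neg hr.le, ← Real.sqrt_eq_rpow,
    Real.sqrt_inv]

lemma mgf_single {Ω : Type*} [MeasurableSpace Ω] (μ : Measure Ω) [IsProbabilityMeasure μ]
    (p : ℝ) (hp : p ∈ Set.Ioo (0:ℝ) 1) (η : Ω → ℝ) (hmeas : Measurable η)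
    (hval : ∀ᵐ ω ∂μ, η ω = 0 ∨ η ω = 1)
    (hber : μ {ω | η ω = 1} = ENNReal.ofReal p) :
    mgf (fun ω => Real.log (p / (1 - p)) * (2 * η ω - 1)) μ (-(1/2)) =
      2 * Real.sqrt (p * (1 - p)) := by
  obtain ⟨hp0, hp1⟩ := hp
  have hq0 : (0:ℝ) < 1 - p := by linarith
  have hr : (0:ℝ) < p / (1 - p) := div_pos hp0 hq0
  have hr' : (0:ℝ) < (1 - p) / p := div_pos hq0 hp0
  set w := Real.log (p / (1 - p)) with hw
  set a := Real.sqrt ((1 - p) / p) with ha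
  set b := Real.sqrt (p / (1 - p)) with hb
  have hA : MeasurableSet {ω | η ω = 1} := hmeas (measurableSet_singleton 1)
  have hB : MeasurableSet {ω | η ω = 0} := hmeas (measurableSet_singleton 0)
  -- exponent values
  have hexp1 : Real.exp (-(1/2) * (w * (2 * (1:ℝ) - 1))) = a := by
    have : -(1/2) * (w * (2 * (1:ℝ) - 1)) = -(1/2) * w := by ring
    rw [this, hw, exp_neg_half_log hr, ha, inv_div]
  have hexp0 : Real.exp (-(1/2) * (w * (2 * (0:ℝ) - 1))) = b := by
    have h1 : -(1/2) * (w * (2 * (0:ℝ) - 1)) = -(1/2) * (-w) := by ring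
    have h2 : -w = Real.log ((1 - p) / p) := by
      rw [hw, ← Real.log_inv, inv_div]
    rw [h1, h2, exp_neg_half_log hr', hb, inv_div]
  -- a.e. identification with indicator combination
  have hae : (fun ω => Real.exp (-(1/2) * (w * (2 * η ω - 1)))) =ᵐ[μ]
      fun ω => Set.indicator {ω | η ω = 1} (fun _ => a) ω
        + Set.indicator {ω | η ω = 0} (fun _ => b) ω := by
    filter_upwards [hval] with ω hω
    rcases hω with h | h
    · simp only [Set.indicator_apply, Set.mem_setOf_eq, h]
      norm_num
      rw [← hexp0]
      norm_num
    · simp only [Set.indicator_apply, Set.mem_setOf_eq, h]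
      norm_num
      rw [← hexp1]
      norm_num
  -- measure of {η = 0}
  have hμU : μ ({ω | η ω = 0} ∪ {ω | η ω = 1}) = 1 := by
    rw [← prob_compl_eq_zero_iff (hB.union hA)]
    refine measure_eq_zero_iff_ae_notMem.mpr ?_
    filter_upwards [hval] with ω hω hmem
    exact hmem hω
  have hdisj : Disjoint {ω | η ω = 0} {ω | η ω = 1} := by
    rw [Set.disjoint_left]
    intro ω h0 h1
    simp only [Set.mem_setOf_eq] at h0 h1
    rw [h0] at h1
    norm_num at h1
  have hμB : μ {ω | η ω = 0} = ENNReal.ofReal (1 - p) := by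
    have hsum : μ {ω | η ω = 0} + ENNReal.ofReal p = 1 := by
      rw [← hber, ← measure_union hdisj hA, hμU]
    have hsum' : ENNReal.ofReal (1 - p) + ENNReal.ofReal p = 1 := by
      rw [← ENNReal.ofReal_add hq0.le hp0.le]
      norm_num
    have := hsum.trans hsum'.symm
    exact WithTop.add_right_cancel ENNReal.ofReal_ne_top this
  -- compute the integral
  rw [mgf]
  rw [integral_congr_ae hae,
    integral_add ((integrable_const a).indicator hA) ((integrable_const b).indicator hB),
    integral_indicator_const _ hA, integral_indicator_const _ hB, measureReal_def, measureReal_def, hber, hμB,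
    ENNReal.toReal_ofReal hp0.le, ENNReal.toReal_ofReal hq0.le, smul_eq_mul, smul_eq_mul]
  have h1 : p * a = Real.sqrt (p * (1 - p)) := sqrt_mul_self_aux hp0 hq0.le
  have h2 : (1 - p) * b = Real.sqrt (p * (1 - p)) := by
    rw [hb, sqrt_mul_self_aux hq0 hp0.le, mul_comm]
  rw [h1, h2]
  ring

/-- Sharp Chernoff-type bound for the naive Bayes rule:
`P(error) ≤ ∏ i, √(4 pᵢ qᵢ)` for independent Bernoulli correctness indicators. -/
theorem stmt_4 {Ω : Type*} [MeasurableSpace Ω] (μ : Measure Ω) [IsProbabilityMeasure μ]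
    (N : ℕ) (hN : 1 ≤ N) (p : Fin N → ℝ) (hp : ∀ i, p i ∈ Set.Ioo (0:ℝ) 1)
    (η : Fin N → Ω → ℝ) (hmeas : ∀ i, Measurable (η i))
    (hindep : iIndepFun η μ)
    (hval : ∀ i, ∀ᵐ ω ∂μ, η i ω = 0 ∨ η i ω = 1)
    (hber : ∀ i, μ {ω | η i ω = 1} = ENNReal.ofReal (p i)) :
    (μ {ω | ∑ i, Real.log (p i / (1 - p i)) * (2 * η i ω - 1) ≤ 0}).toReal ≤
      ∏ i, 2 * Real.sqrt (p i * (1 - p i)) := by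
  set w : Fin N → ℝ := fun i => Real.log (p i / (1 - p i)) with hw
  set X : Fin N → Ω → ℝ := fun i ω => w i * (2 * η i ω - 1) with hX
  have hXmeas : ∀ i, Measurable (X i) := fun i =>
    ((measurable_const.mul (hmeas i)).sub measurable_const).const_mul _
  have hXindep : iIndepFun X μ := by
    have := hindep.comp (fun i x => w i * (2 * x - 1))
      (fun i => ((measurable_const.mul measurable_id).sub measurable_const).const_mul _)
    exact this
  set S : Ω → ℝ := fun ω => ∑ i, X i ω with hS
  have hSfun : S = ∑ i, X i := by
    ext ω
    simp [hS, Finset.sum_apply]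
  have hSmeas : Measurable S := Finset.measurable_sum _ fun i _ => hXmeas i
  have hset : {ω | ∑ i, Real.log (p i / (1 - p i)) * (2 * η i ω - 1) ≤ 0} =
      {ω | S ω ≤ 0} := rfl
  have hint : Integrable (fun ω => Real.exp (-(1/2) * S ω)) μ := by
    refine ⟨(hSmeas.const_mul _).exp.aestronglyMeasurable, ?_⟩
    apply HasFiniteIntegral.of_bounded (C := Real.exp (∑ i, |w i| * (1/2)))
    filter_upwards [ae_all_iff.2 hval] with ω hω
    rw [Real.norm_eq_abs, abs_of_pos (Real.exp_pos _), Real.exp_le_exp]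
    calc -(1/2) * S ω = ∑ i, -(1/2) * X i ω := by
          rw [hS, Finset.mul_sum]
      _ ≤ ∑ i, |w i| * (1/2) := by
          refine Finset.sum_le_sum fun i _ => ?_
          rcases hω i with h | h <;> rw [hX] <;> simp only [h] <;>
            nlinarith [le_abs_self (w i), neg_abs_le (w i)]
  have hcher := measure_le_le_exp_mul_mgf (μ := μ) (X := S) 0
    (by norm_num : (-(1/2):ℝ) ≤ 0) hint
  rw [hset]
  calc (μ {ω | S ω ≤ 0}).toReal ≤ Real.exp (-(-(1/2)) * 0) * mgf S μ (-(1/2)) := hcher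
    _ = mgf S μ (-(1/2)) := by simp
    _ = ∏ i, mgf (X i) μ (-(1/2)) := by
        rw [hSfun]; exact hXindep.mgf_sum hXmeas Finset.univ
    _ = ∏ i, 2 * Real.sqrt (p i * (1 - p i)) :=
        Finset.prod_congr rfl fun i _ =>
          mgf_single μ (p i) (hp i) (η i) (hmeas i) (hval i) (hber i)
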